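/- Let V be a finite-dimensional real vector space, D ⊆ V ⊕ V* Lagrangian for the pairing ⟨(u,α),(v,β)⟩ = β(u) + α(v), and K ⊆ V a subspace with 𝒦 = K ⊕ {0}. Then (D ∩ 𝒦^⊥)^⊥ = D + 𝒦, where orthogonal complements are taken with respect to the pairing on V ⊕ V*. -/

import Mathlib

open Module

/-- The canonical symmetric pairing on `V ⊕ V*`:
`⟨(u,α),(v,β)⟩ = β(u) + α(v)`. -/
noncomputable def pairingForm (V : Type*) [AddCommGroup V] [Module ℝ V] :
    LinearMap.BilinForm ℝ (V × Module.Dual ℝ V) :=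
  LinearMap.mk₂ ℝ (fun p q => q.2 p.1 + p.2 q.1)
    (fun p p' q => by
      simp only [Prod.fst_add, Prod.snd_add, map_add, LinearMap.add_apply]; ring)
    (fun c p q => by
      simp only [Prod.smul_fst, Prod.smul_snd, map_smul, LinearMap.smul_apply,
        smul_eq_mul]; ring)
    (fun p q q' => by
      simp only [Prod.fst_add, Prod.snd_add, map_add, LinearMap.add_apply]; ring)
    (fun p c q => by
      simp only [Prod.smul_fst, Prod.smul_snd, map_smul, LinearMap.smul_apply,
        smul_eq_mul]; ring)

lemma pairingForm_apply (V : Type*) [AddCommGroup V] [Module ℝ V]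
    (p q : V × Module.Dual ℝ V) : pairingForm V p q = q.2 p.1 + p.2 q.1 := rfl

lemma pairingForm_isRefl (V : Type*) [AddCommGroup V] [Module ℝ V] :
    (pairingForm V).IsRefl := by
  intro p q h
  rw [pairingForm_apply] at h ⊢
  linarith

lemma pairingForm_nondegenerate (V : Type*) [AddCommGroup V] [Module ℝ V]
    [FiniteDimensional ℝ V] : (pairingForm V).Nondegenerate := by
  refine (LinearMap.IsRefl.nondegenerate_iff_separatingLeft (pairingForm_isRefl V)).mpr ?_
  intro p hp
  have h1 : p.1 = 0 := by
    rw [← Module.forall_dual_apply_eq_zero_iff ℝ]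
    intro φ
    have := hp (0, φ)
    simpa [pairingForm_apply] using this
  have h2 : p.2 = 0 := by
    ext v
    have := hp (v, 0)
    simpa [pairingForm_apply] using this
  exact Prod.ext h1 h2

lemma pairingForm_orthogonal_sup (V : Type*) [AddCommGroup V] [Module ℝ V]
    (A B : Submodule ℝ (V × Module.Dual ℝ V)) :
    (pairingForm V).orthogonal (A ⊔ B)
      = (pairingForm V).orthogonal A ⊓ (pairingForm V).orthogonal B := by
  apply le_antisymm
  · exact le_inf ((pairingForm V).orthogonal_le le_sup_left)
      ((pairingForm V).orthogonal_le le_sup_right)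
  · rintro x ⟨hxA, hxB⟩ n hn
    rcases Submodule.mem_sup.mp hn with ⟨a, ha, b, hb, rfl⟩
    have := hxA a ha
    have := hxB b hb
    simp only [LinearMap.BilinForm.IsOrtho, map_add, LinearMap.add_apply] at *
    linarith

/-- for a Lagrangian `D ⊆ V ⊕ V*` and `𝒦 = K ⊕ {0}`, one has
`(D ∩ 𝒦^⊥)^⊥ = D + 𝒦`, where orthogonal complements are taken with respect to
the canonical symmetric pairing on `V ⊕ V*`. -/
theorem orthogonal_of_inter
    (V : Type*) [AddCommGroup V] [Module ℝ V] [FiniteDimensional ℝ V]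
    (D : Submodule ℝ (V × Module.Dual ℝ V))
    (hD : D = (pairingForm V).orthogonal D)
    (K : Submodule ℝ V) :
    (pairingForm V).orthogonal
        (D ⊓ (pairingForm V).orthogonal (K.prod (⊥ : Submodule ℝ (Module.Dual ℝ V))))
      = D ⊔ K.prod (⊥ : Submodule ℝ (Module.Dual ℝ V)) := by
  conv_lhs => rw [hD, ← pairingForm_orthogonal_sup]
  exact LinearMap.BilinForm.orthogonal_orthogonal (pairingForm_nondegenerate V)
    (pairingForm_isRefl V) _
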